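/- In the one-period binomial model with symmetric ε and no contingent claim (λ = 0), the exponential-utility value function satisfies V(x) = sup_α E[-exp(-γ(x + α(μh + σ√h ε)))] = -exp(-γx)·ρ(θ, h), where ρ(θ,h) = (1/2)[((1+θ√h)/(1-θ√h))^{-(1+θ√h)/2} + ((1+θ√h)/(1-θ√h))^{(1-θ√h)/2}] and θ = μ/σ; in particular V(x) is of the form -exp(-γx) times a constant independent of x. -/

import Mathlib

open MeasureTheory Real

/-- Integral of a function of a symmetric ±1 random variable. -/
lemma integral_pm_one {Ω : Type*} [MeasurableSpace Ω]
    (P : Measure Ω) [IsProbabilityMeasure P]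
    (ε : Ω → ℝ) (hεmeas : Measurable ε) (hεval : ∀ ω, ε ω = 1 ∨ ε ω = -1)
    (hsym : P {ω | ε ω = 1} = 1 / 2) (f : ℝ → ℝ) :
    ∫ ω, f (ε ω) ∂P = (1 / 2) * f 1 + (1 / 2) * f (-1) := by
  have hA : MeasurableSet {ω | ε ω = 1} := hεmeas (measurableSet_singleton 1)
  have hfun : (fun ω => f (ε ω)) =
      fun ω => Set.indicator {ω | ε ω = 1} (fun _ => f 1) ω
        + Set.indicator {ω | ε ω = 1}ᶜ (fun _ => f (-1)) ω := by
    funext ω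
    rcases hεval ω with h1 | h1
    · simp [Set.indicator_apply, h1]
    · have hne : ¬ (ε ω = 1) := by rw [h1]; norm_num
      simp [Set.indicator_apply, h1, hne]
      norm_num
  have hcompl : P ({ω | ε ω = 1}ᶜ) = 1 / 2 := by
    rw [measure_compl hA (measure_ne_top P _), hsym, measure_univ, one_div,
      ENNReal.one_sub_inv_two]
  rw [hfun, integral_add ((integrable_const (f 1)).indicator hA)
      ((integrable_const (f (-1))).indicator hA.compl),
    integral_indicator_const _ hA, integral_indicator_const _ hA.compl,
    measureReal_def, measureReal_def, hsym, hcompl]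
  simp [ENNReal.toReal_div]

/-- in the one-period binomial model without a claim, the
exponential-utility value function is -exp(-γx)·ρ(θ,h). -/
theorem one_period_value_function {Ω : Type*} [MeasurableSpace Ω]
    (P : Measure Ω) [IsProbabilityMeasure P]
    (ε : Ω → ℝ) (hεmeas : Measurable ε) (hεval : ∀ ω, ε ω = 1 ∨ ε ω = -1)
    (hsym : P {ω | ε ω = 1} = 1 / 2)
    (γ σ h μ x : ℝ) (hγ : 0 < γ) (hσ : 0 < σ) (hh : 0 < h)
    (hθ : |μ * Real.sqrt h / σ| < 1) :
    let θ : ℝ := μ / σ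
    let ρ : ℝ := (1 / 2) *
      (((1 + θ * Real.sqrt h) / (1 - θ * Real.sqrt h)) ^ (-(1 + θ * Real.sqrt h) / 2)
        + ((1 + θ * Real.sqrt h) / (1 - θ * Real.sqrt h)) ^ ((1 - θ * Real.sqrt h) / 2))
    (⨆ α : ℝ, ∫ ω, -Real.exp (-γ * (x + α * (μ * h + σ * Real.sqrt h * ε ω))) ∂P)
      = -Real.exp (-γ * x) * ρ := by
  intro θ ρ
  have hsq : (0:ℝ) < Real.sqrt h := Real.sqrt_pos.mpr hh
  set s : ℝ := θ * Real.sqrt h with hs_def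
  have hs_eq : s = μ * Real.sqrt h / σ := by
    simp only [hs_def, θ]; ring
  have habs : |s| < 1 := by rw [hs_eq]; exact hθ
  obtain ⟨hl, hr⟩ := abs_lt.mp habs
  have h1s : (0:ℝ) < 1 + s := by linarith
  have h1s' : (0:ℝ) < 1 - s := by linarith
  set K : ℝ := (1 + s) / (1 - s) with hK_def
  have hK : 0 < K := div_pos h1s h1s'
  set c : ℝ := σ * Real.sqrt h with hc_def
  have hc : 0 < c := mul_pos hσ hsq
  have hμh : μ * h = s * c := by
    have hh2 : Real.sqrt h * Real.sqrt h = h := Real.mul_self_sqrt hh.le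
    rw [hs_eq, hc_def]
    field_simp
    linear_combination (-μ) * hh2
  set E1 : ℝ := K ^ (-(1 + s) / 2) with hE1_def
  set E2 : ℝ := K ^ ((1 - s) / 2) with hE2_def
  have hE1pos : 0 < E1 := Real.rpow_pos_of_pos hK _
  have hE2pos : 0 < E2 := Real.rpow_pos_of_pos hK _
  have hE1 : E1 = Real.exp (Real.log K * (-(1 + s) / 2)) := Real.rpow_def_of_pos hK _
  have hE2 : E2 = Real.exp (Real.log K * ((1 - s) / 2)) := Real.rpow_def_of_pos hK _
  -- E2 = E1 * K
  have hE21 : E2 = E1 * K := by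
    rw [hE1_def, hE2_def, show (1 - s)/2 = (-(1 + s)/2) + 1 by ring,
      Real.rpow_add hK, Real.rpow_one]
  -- first-order condition: (1+s) E1 = (1-s) E2
  have hfoc : (1 + s) * E1 = (1 - s) * E2 := by
    rw [hE21, hK_def]
    field_simp
  set αs : ℝ := Real.log K / (2 * γ * c) with hαs_def
  -- the value of the integral for a given α
  have hval : ∀ α : ℝ, (∫ ω, -Real.exp (-γ * (x + α * (μ * h + σ * Real.sqrt h * ε ω))) ∂P)
      = -Real.exp (-γ * x) * ((1/2) * (Real.exp (-(γ * α * (c * (1 + s))))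
        + Real.exp (-(γ * α * (c * (s - 1)))))) := by
    intro α
    rw [integral_pm_one P ε hεmeas hεval hsym
      (fun t => -Real.exp (-γ * (x + α * (μ * h + σ * Real.sqrt h * t))))]
    have e1 : -γ * (x + α * (μ * h + σ * Real.sqrt h * 1)) = -γ * x + -(γ * α * (c * (1 + s))) := by
      rw [hμh]; simp only [hc_def]; ring
    have e2 : -γ * (x + α * (μ * h + σ * Real.sqrt h * (-1))) = -γ * x + -(γ * α * (c * (s - 1))) := by
      rw [hμh]; simp only [hc_def]; ring
    rw [e1, e2, Real.exp_add, Real.exp_add]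
    ring
  -- value at the optimizer
  have hexp1 : Real.exp (-(γ * αs * (c * (1 + s)))) = E1 := by
    rw [hE1, hαs_def]
    congr 1
    field_simp
  have hexp2 : Real.exp (-(γ * αs * (c * (s - 1)))) = E2 := by
    rw [hE2, hαs_def]
    congr 1
    field_simp
    ring
  have hexpx : 0 < Real.exp (-γ * x) := Real.exp_pos _
  -- the core inequality
  have hcore : ∀ α : ℝ, (1/2) * (E1 + E2) ≤
      (1/2) * (Real.exp (-(γ * α * (c * (1 + s)))) + Real.exp (-(γ * α * (c * (s - 1))))) := by
    intro α
    have h1 : Real.exp (-(γ * α * (c * (1 + s))))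
        = E1 * Real.exp (-(γ * (α - αs) * (c * (1 + s)))) := by
      rw [← hexp1, ← Real.exp_add]; congr 1; ring
    have h2 : Real.exp (-(γ * α * (c * (s - 1))))
        = E2 * Real.exp (-(γ * (α - αs) * (c * (s - 1)))) := by
      rw [← hexp2, ← Real.exp_add]; congr 1; ring
    have b1 : (-(γ * (α - αs) * (c * (1 + s)))) + 1 ≤ Real.exp (-(γ * (α - αs) * (c * (1 + s)))) :=
      Real.add_one_le_exp _
    have b2 : (-(γ * (α - αs) * (c * (s - 1)))) + 1 ≤ Real.exp (-(γ * (α - αs) * (c * (s - 1)))) :=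
      Real.add_one_le_exp _
    have hzero : E1 * (-(γ * (α - αs) * (c * (1 + s))))
        + E2 * (-(γ * (α - αs) * (c * (s - 1)))) = 0 := by
      linear_combination (-(γ * (α - αs) * c)) * hfoc
    rw [h1, h2]
    nlinarith [hzero, mul_le_mul_of_nonneg_left b1 hE1pos.le,
      mul_le_mul_of_nonneg_left b2 hE2pos.le]
  -- upper bound
  have hρ : ρ = (1/2) * (E1 + E2) := rfl
  have hub : ∀ α : ℝ, (∫ ω, -Real.exp (-γ * (x + α * (μ * h + σ * Real.sqrt h * ε ω))) ∂P)
      ≤ -Real.exp (-γ * x) * ρ := by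
    intro α
    rw [hval α, hρ]
    have h2 := mul_le_mul_of_nonneg_left (hcore α) hexpx.le
    linarith only [h2]
  have hatt : (∫ ω, -Real.exp (-γ * (x + αs * (μ * h + σ * Real.sqrt h * ε ω))) ∂P)
      = -Real.exp (-γ * x) * ρ := by
    rw [hval αs, hexp1, hexp2, hρ]
  refine le_antisymm (ciSup_le hub) ?_
  calc -Real.exp (-γ * x) * ρ
      = ∫ ω, -Real.exp (-γ * (x + αs * (μ * h + σ * Real.sqrt h * ε ω))) ∂P := hatt.symm
    _ ≤ _ := le_ciSup ⟨-Real.exp (-γ * x) * ρ, Set.forall_mem_range.mpr hub⟩ αs
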